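/- Let k ≥ 2 be an integer. Let W ∈ ℚ⟦q⟧ be the formal power series whose coefficient of q^d is (kd)!/(d!)^k for every integer d ≥ 0. Let θ : ℚ⟦q⟧ → ℚ⟦q⟧ be the operator θ(F) := q·(dF/dq). Then θ^(k−1)(W) = k·q·(k·θ + (k−1))∘(k·θ + (k−2))∘···∘(k·θ + 1)(W), where for a scalar c the operator k·θ + c sends F to k·θ(F) + c·F. -/

import Mathlib

open Nat PowerSeries

/-- The operator `θ = q·d/dq` on formal power series. -/
noncomputable def theta (F : PowerSeries ℚ) : PowerSeries ℚ :=
  PowerSeries.X * PowerSeries.derivative ℚ F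

/-- The iterated application `(k·θ + n) ∘ ⋯ ∘ (k·θ + 1)` applied to `W`. -/
noncomputable def opChain (k : ℕ) (W : PowerSeries ℚ) : ℕ → PowerSeries ℚ
  | 0 => W
  | n + 1 => (k : ℚ) • theta (opChain k W n) + ((n : ℚ) + 1) • opChain k W n

lemma coeff_theta (F : PowerSeries ℚ) (d : ℕ) :
    PowerSeries.coeff d (theta F) = d * PowerSeries.coeff d F := by
  cases d with
  | zero => simp [theta]
  | succ n =>
    rw [theta, PowerSeries.coeff_succ_X_mul, PowerSeries.coeff_derivative]
    push_cast; ring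

lemma coeff_theta_iter (n : ℕ) (F : PowerSeries ℚ) (d : ℕ) :
    PowerSeries.coeff d (theta^[n] F) = (d : ℚ) ^ n * PowerSeries.coeff d F := by
  induction n with
  | zero => simp
  | succ m ih =>
    rw [Function.iterate_succ_apply', coeff_theta, ih]
    ring

lemma coeff_opChain (k : ℕ) (W : PowerSeries ℚ) (n d : ℕ) :
    PowerSeries.coeff d (opChain k W n)
      = (∏ j ∈ Finset.range n, ((k * d + j + 1 : ℕ) : ℚ)) * PowerSeries.coeff d W := by
  induction n with
  | zero => simp [opChain]
  | succ m ih =>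
    rw [opChain, map_add, map_smul, map_smul, coeff_theta, ih, Finset.prod_range_succ]
    simp only [smul_eq_mul]
    push_cast; ring

lemma factorial_add_prod (a m : ℕ) :
    (a + m).factorial = a.factorial * ∏ j ∈ Finset.range m, (a + j + 1) := by
  induction m with
  | zero => simp
  | succ n ih =>
    rw [Finset.prod_range_succ, ← Nat.mul_assoc, ← ih, ← Nat.add_assoc,
      Nat.factorial_succ, Nat.mul_comm]

theorem stmt_8 (k : ℕ) (hk : 2 ≤ k) :
    theta^[k - 1] (PowerSeries.mk fun d => ((k * d).factorial : ℚ) / (d.factorial : ℚ) ^ k)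
    = (k : ℚ) • (PowerSeries.X *
        opChain k (PowerSeries.mk fun d => ((k * d).factorial : ℚ) / (d.factorial : ℚ) ^ k)
          (k - 1)) := by
  obtain ⟨m, rfl⟩ : ∃ m, k = m + 2 := ⟨k - 2, by omega⟩
  set W : PowerSeries ℚ :=
    PowerSeries.mk fun d => (((m + 2) * d).factorial : ℚ) / (d.factorial : ℚ) ^ (m + 2) with hW
  ext d
  rw [coeff_theta_iter, map_smul]
  cases d with
  | zero =>
    simp [hW, PowerSeries.coeff_zero_eq_constantCoeff]
  | succ e =>
    rw [PowerSeries.coeff_succ_X_mul, coeff_opChain, hW]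
    simp only [PowerSeries.coeff_mk]
    have h1 : ((m + 2) * (e + 1)).factorial
        = ((m + 2) * e).factorial * ∏ j ∈ Finset.range (m + 2), ((m + 2) * e + j + 1) := by
      have := factorial_add_prod ((m + 2) * e) (m + 2)
      rwa [show (m + 2) * e + (m + 2) = (m + 2) * (e + 1) by ring] at this
    have h2 : ∏ j ∈ Finset.range (m + 2), ((m + 2) * e + j + 1)
        = (∏ j ∈ Finset.range (m + 1), ((m + 2) * e + j + 1)) * ((m + 2) * (e + 1)) := by
      rw [Finset.prod_range_succ]; ring
    rw [h1, h2]
    have hfac : ((e + 1).factorial : ℚ) = (e.factorial : ℚ) * (e + 1) := by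
      push_cast [Nat.factorial_succ]; ring
    have he : (e.factorial : ℚ) ≠ 0 := by positivity
    have he1 : ((e : ℚ) + 1) ≠ 0 := by positivity
    have hp : ((∏ j ∈ Finset.range (m + 1), ((m + 2) * e + j + 1) : ℕ) : ℚ)
        = ∏ j ∈ Finset.range (m + 1), (((m + 2) * e + j + 1 : ℕ) : ℚ) := by push_cast; rfl
    rw [show m + 2 - 1 = m + 1 from rfl, hfac, ← hp]
    push_cast
    rw [mul_pow]
    rw [smul_eq_mul]
    field_simp
    ring
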